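/- arXiv:1404.5545 — 4 statements merged into one kernel-verified Lean document; each statement's English description precedes it below -/
import Mathlib

section
/- A function f on the hypergrid belongs to the bounded-derivative property P(B) if and only if for all points x, y in [n]^d one has f(x) − f(y) ≤ m(x,y), where m is the quasimetric associated to the bounding family B. -/
open Finset

/-- Membership of a point in the hypergrid `[n]^d = {1,…,n}^d`. -/
def inGrid (n d : ℕ) (x : Fin d → ℕ) : Prop := ∀ r : Fin d, 1 ≤ x r ∧ x r ≤ n

/-- The quasimetric associated to a bounding family `(l, u)`:
`m(x,y) = Σ_{r : x_r > y_r} Σ_{t=y_r}^{x_r-1} u_r(t) − Σ_{r : x_r < y_r} Σ_{t=x_r}^{y_r-1} l_r(t)`. -/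
def qm (d : ℕ) (l u : Fin d → ℕ → ℝ) (x y : Fin d → ℕ) : ℝ :=
  ∑ r : Fin d, ((∑ t ∈ Finset.Ico (y r) (x r), u r t) - ∑ t ∈ Finset.Ico (x r) (y r), l r t)

/-- `f` belongs to the bounded-derivative property `P(B)` for the bounding family `(l,u)`. -/
def memP (n d : ℕ) (l u : Fin d → ℕ → ℝ) (f : (Fin d → ℕ) → ℝ) : Prop :=
  ∀ r : Fin d, ∀ x : Fin d → ℕ, inGrid n d x → x r + 1 ≤ n →
    l r (x r) ≤ f (Function.update x r (x r + 1)) - f x ∧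
    f (Function.update x r (x r + 1)) - f x ≤ u r (x r)

lemma qm_update (d : ℕ) (l u : Fin d → ℕ → ℝ) (x y : Fin d → ℕ) (r : Fin d) (v : ℕ) :
    qm d l u (Function.update x r v) y
      = qm d l u x y - ((∑ t ∈ Finset.Ico (y r) (x r), u r t) - ∑ t ∈ Finset.Ico (x r) (y r), l r t)
        + ((∑ t ∈ Finset.Ico (y r) v, u r t) - ∑ t ∈ Finset.Ico v (y r), l r t) := by
  unfold qm
  rw [← Finset.sum_erase_add _ _ (Finset.mem_univ r),
      ← Finset.sum_erase_add (f := fun r' => ((∑ t ∈ Finset.Ico (y r') (x r'), u r' t)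
        - ∑ t ∈ Finset.Ico (x r') (y r'), l r' t)) _ (Finset.mem_univ r)]
  have hsum : ∑ r' ∈ Finset.univ.erase r,
      ((∑ t ∈ Finset.Ico (y r') (Function.update x r v r'), u r' t)
        - ∑ t ∈ Finset.Ico (Function.update x r v r') (y r'), l r' t)
      = ∑ r' ∈ Finset.univ.erase r,
      ((∑ t ∈ Finset.Ico (y r') (x r'), u r' t)
        - ∑ t ∈ Finset.Ico (x r') (y r'), l r' t) := by
    apply Finset.sum_congr rfl
    intro r' hr'
    rw [Function.update_of_ne (Finset.mem_erase.mp hr').1]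
  rw [hsum, Function.update_self]
  ring

/-- `f ∈ P(B)` iff `f(x) − f(y) ≤ m(x,y)` for all `x, y ∈ [n]^d`. -/
theorem stmt0 (n d : ℕ) (hn : 2 ≤ n) (hd : 1 ≤ d)
    (l u : Fin d → ℕ → ℝ)
    (hlu : ∀ r : Fin d, ∀ t : ℕ, 1 ≤ t → t + 1 ≤ n → l r t < u r t)
    (f : (Fin d → ℕ) → ℝ) :
    memP n d l u f ↔
      ∀ x y : Fin d → ℕ, inGrid n d x → inGrid n d y →
        f x - f y ≤ qm d l u x y := by
  constructor
  · intro hf x y hx hy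
    suffices h : ∀ N : ℕ, ∀ x y : Fin d → ℕ, inGrid n d x → inGrid n d y →
        (∑ r : Fin d, ((x r - y r) + (y r - x r))) = N → f x - f y ≤ qm d l u x y from
      h _ x y hx hy rfl
    intro N
    induction N using Nat.strong_induction_on with
    | _ N ih =>
      intro x y hx hy hN
      by_cases hxy : x = y
      · subst hxy
        simp [qm]
      · have hex : ∃ r, x r ≠ y r := by
          by_contra h; push_neg at h; exact hxy (funext h)
        obtain ⟨r, hr⟩ := hex
        rcases lt_or_gt_of_ne hr with hlt | hgt
        · -- x r < y r : move x up
          set x' := Function.update x r (x r + 1) with hx'def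
          have hx'grid : inGrid n d x' := by
            intro r'
            by_cases h : r' = r
            · subst h
              simp only [hx'def, Function.update_self]
              exact ⟨by omega, le_trans hlt (hy r').2⟩
            · simp only [hx'def, Function.update_of_ne h]; exact hx r'
          have hbd : x r + 1 ≤ n := le_trans hlt (hy r).2
          have step : l r (x r) ≤ f x' - f x := (hf r x hx hbd).1
          have hD : (∑ r' : Fin d, ((x' r' - y r') + (y r' - x' r'))) < N := by
            rw [← hN]
            apply Finset.sum_lt_sum
            · intro i _
              by_cases h : i = r
              · subst h; simp only [hx'def, Function.update_self]; omega
              · simp only [hx'def, Function.update_of_ne h]; omega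
            · exact ⟨r, Finset.mem_univ r, by
                simp only [hx'def, Function.update_self]; omega⟩
          have ihx : f x' - f y ≤ qm d l u x' y := ih _ hD x' y hx'grid hy rfl
          have hqm : qm d l u x' y = qm d l u x y + l r (x r) := by
            rw [hx'def, qm_update]
            have e1 : Finset.Ico (y r) (x r) = ∅ := Finset.Ico_eq_empty (by omega)
            have e2 : Finset.Ico (y r) (x r + 1) = ∅ := Finset.Ico_eq_empty (by omega)
            rw [e1, e2, Finset.sum_eq_sum_Ico_succ_bot hlt (l r)]
            simp; ring
          linarith
        · -- x r > y r : move x down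
          set x' := Function.update x r (x r - 1) with hx'def
          have hyr1 : 1 ≤ y r := (hy r).1
          have hx'grid : inGrid n d x' := by
            intro r'
            by_cases h : r' = r
            · subst h
              simp only [hx'def, Function.update_self]
              exact ⟨by omega, by have := (hx r').2; omega⟩
            · simp only [hx'def, Function.update_of_ne h]; exact hx r'
          have hxx : Function.update x' r (x' r + 1) = x := by
            simp only [hx'def, Function.update_self]
            rw [Function.update_idem]
            have h1 : x r - 1 + 1 = x r := by omega
            rw [h1, Function.update_eq_self]
          have step : f x - f x' ≤ u r (x r - 1) := by
            have hbd : x' r + 1 ≤ n := by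
              simp only [hx'def, Function.update_self]
              have := (hx r).2; omega
            have := (hf r x' hx'grid hbd).2
            rw [hxx] at this
            simpa [hx'def] using this
          have hD : (∑ r' : Fin d, ((x' r' - y r') + (y r' - x' r'))) < N := by
            rw [← hN]
            apply Finset.sum_lt_sum
            · intro i _
              by_cases h : i = r
              · subst h; simp only [hx'def, Function.update_self]; omega
              · simp only [hx'def, Function.update_of_ne h]; omega
            · exact ⟨r, Finset.mem_univ r, by
                simp only [hx'def, Function.update_self]; omega⟩
          have ihx : f x' - f y ≤ qm d l u x' y := ih _ hD x' y hx'grid hy rfl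
          have hqm : qm d l u x' y = qm d l u x y - u r (x r - 1) := by
            rw [hx'def, qm_update]
            have e1 : Finset.Ico (x r) (y r) = ∅ := Finset.Ico_eq_empty (by omega)
            have e2 : Finset.Ico (x r - 1) (y r) = ∅ := Finset.Ico_eq_empty (by omega)
            have h1 : x r = (x r - 1) + 1 := by omega
            rw [e1, e2, h1, Finset.sum_Ico_succ_top (by omega) (u r)]
            simp; ring
          linarith
  · intro h r x hx hxr
    set x' := Function.update x r (x r + 1) with hx'def
    have hx'grid : inGrid n d x' := by
      intro r'
      by_cases hh : r' = r
      · subst hh; simp only [hx'def, Function.update_self]; exact ⟨by omega, hxr⟩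
      · simp only [hx'def, Function.update_of_ne hh]; exact hx r'
    have h1 := h x' x hx'grid hx
    have h2 := h x x' hx hx'grid
    have hq1 : qm d l u x' x = u r (x r) := by
      rw [hx'def, qm_update]
      simp [qm, Nat.Ico_succ_singleton]
    have hq2 : qm d l u x x' = - l r (x r) := by
      unfold qm
      rw [Fintype.sum_eq_single r]
      · simp [hx'def, Nat.Ico_succ_singleton]
      · intro r' hr'
        simp [hx'def, Function.update_of_ne hr']
    rw [hq1] at h1; rw [hq2] at h2
    constructor <;> linarith
end

section
/- Let f and g be two real-valued functions on [n]^d with the same bounding family B, and let W_f (resp. W_g) denote the maximum over matchings M of the violation graph of f (resp. of g) of the total violation score vs_f(M) (resp. vs_g(M)). Then |W_f − W_g| ≤ Σ_{x∈[n]^d} |f(x) − g(x)|. -/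
open Finset

/-- The violation score of a pair `(x,y)` for the function `h`. -/
def vs (d : ℕ) (l u : Fin d → ℕ → ℝ) (h : (Fin d → ℕ) → ℝ) (x y : Fin d → ℕ) : ℝ :=
  max (h x - h y - qm d l u x y) (h y - h x - qm d l u y x)

/-- A matching of the violation graph `G_h`: a finite set of violated pairs of
grid points in which each point of the hypergrid occurs at most once. -/
def IsMatching (n d : ℕ) (l u : Fin d → ℕ → ℝ) (h : (Fin d → ℕ) → ℝ)
    (M : Finset ((Fin d → ℕ) × (Fin d → ℕ))) : Prop :=
  (∀ p ∈ M, inGrid n d p.1 ∧ inGrid n d p.2 ∧ p.1 ≠ p.2 ∧ 0 < vs d l u h p.1 p.2) ∧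
  (∀ p ∈ M, ∀ p' ∈ M, p ≠ p' →
    p.1 ≠ p'.1 ∧ p.1 ≠ p'.2 ∧ p.2 ≠ p'.1 ∧ p.2 ≠ p'.2)

/-- The maximum weight of a matching in the violation graph of `h`. -/
noncomputable def maxMatchWeight (n d : ℕ) (l u : Fin d → ℕ → ℝ)
    (h : (Fin d → ℕ) → ℝ) : ℝ :=
  sSup {s : ℝ | ∃ M : Finset ((Fin d → ℕ) × (Fin d → ℕ)),
    IsMatching n d l u h M ∧ s = ∑ p ∈ M, vs d l u h p.1 p.2}

lemma inGrid_mem_Icc {n d : ℕ} {x : Fin d → ℕ} (hx : inGrid n d x) :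
    x ∈ Finset.Icc (fun _ => (1:ℕ)) (fun _ => n) := by
  rw [Finset.mem_Icc]
  exact ⟨fun r => (hx r).1, fun r => (hx r).2⟩

lemma matchSet_nonempty (n d : ℕ) (l u : Fin d → ℕ → ℝ) (h : (Fin d → ℕ) → ℝ) :
    Set.Nonempty {s : ℝ | ∃ M : Finset ((Fin d → ℕ) × (Fin d → ℕ)),
      IsMatching n d l u h M ∧ s = ∑ p ∈ M, vs d l u h p.1 p.2} := by
  refine ⟨0, ∅, ⟨fun p hp => absurd hp (by simp), fun p hp => absurd hp (by simp)⟩, by simp⟩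

lemma matchSet_bdd (n d : ℕ) (l u : Fin d → ℕ → ℝ) (h : (Fin d → ℕ) → ℝ) :
    BddAbove {s : ℝ | ∃ M : Finset ((Fin d → ℕ) × (Fin d → ℕ)),
      IsMatching n d l u h M ∧ s = ∑ p ∈ M, vs d l u h p.1 p.2} := by
  set G := Finset.Icc (fun _ : Fin d => (1:ℕ)) (fun _ => n)
  refine ⟨∑ p ∈ G ×ˢ G, max (vs d l u h p.1 p.2) 0, ?_⟩
  rintro s ⟨M, hM, rfl⟩
  have hsub : M ⊆ G ×ˢ G := by
    intro p hp
    rcases hM.1 p hp with ⟨h1, h2, -, -⟩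
    exact Finset.mem_product.2 ⟨inGrid_mem_Icc h1, inGrid_mem_Icc h2⟩
  calc ∑ p ∈ M, vs d l u h p.1 p.2
      ≤ ∑ p ∈ M, max (vs d l u h p.1 p.2) 0 :=
        Finset.sum_le_sum fun p _ => le_max_left _ _
    _ ≤ ∑ p ∈ G ×ˢ G, max (vs d l u h p.1 p.2) 0 :=
        Finset.sum_le_sum_of_subset_of_nonneg hsub fun p _ _ => le_max_right _ _

lemma vs_le_vs_add (d : ℕ) (l u : Fin d → ℕ → ℝ) (f g : (Fin d → ℕ) → ℝ)
    (x y : Fin d → ℕ) :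
    vs d l u f x y ≤ vs d l u g x y + (|f x - g x| + |f y - g y|) := by
  have h1 : f x - g x ≤ |f x - g x| := le_abs_self _
  have h2 : g x - f x ≤ |f x - g x| := by rw [abs_sub_comm]; exact le_abs_self _
  have h3 : f y - g y ≤ |f y - g y| := le_abs_self _
  have h4 : g y - f y ≤ |f y - g y| := by rw [abs_sub_comm]; exact le_abs_self _
  unfold vs
  have m1 := le_max_left (g x - g y - qm d l u x y) (g y - g x - qm d l u y x)
  have m2 := le_max_right (g x - g y - qm d l u x y) (g y - g x - qm d l u y x)
  apply max_le <;> linarith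

lemma key_lemma (n d : ℕ) (l u : Fin d → ℕ → ℝ) (f g : (Fin d → ℕ) → ℝ) :
    maxMatchWeight n d l u f ≤ maxMatchWeight n d l u g +
      ∑ x ∈ Finset.Icc (fun _ => (1:ℕ)) (fun _ => n), |f x - g x| := by
  set G := Finset.Icc (fun _ : Fin d => (1:ℕ)) (fun _ => n) with hG
  unfold maxMatchWeight
  apply csSup_le (matchSet_nonempty n d l u f)
  rintro s ⟨M, hM, rfl⟩
  set M' := M.filter (fun p => 0 < vs d l u g p.1 p.2) with hM'def
  have hM'sub : M' ⊆ M := Finset.filter_subset _ _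
  have hM' : IsMatching n d l u g M' := by
    constructor
    · intro p hp
      rcases Finset.mem_filter.1 hp with ⟨hpM, hpvs⟩
      rcases hM.1 p hpM with ⟨h1, h2, h3, -⟩
      exact ⟨h1, h2, h3, hpvs⟩
    · intro p hp p' hp' hne
      exact hM.2 p (hM'sub hp) p' (hM'sub hp') hne
  -- endpoint sum bound
  have hD : ∑ p ∈ M, (|f p.1 - g p.1| + |f p.2 - g p.2|) ≤ ∑ x ∈ G, |f x - g x| := by
    rw [Finset.sum_add_distrib]
    have hinj1 : Set.InjOn (Prod.fst : (Fin d → ℕ) × (Fin d → ℕ) → (Fin d → ℕ)) ↑M := by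
      intro p hp p' hp' heq
      by_contra hne
      exact (hM.2 p hp p' hp' hne).1 heq
    have hinj2 : Set.InjOn (Prod.snd : (Fin d → ℕ) × (Fin d → ℕ) → (Fin d → ℕ)) ↑M := by
      intro p hp p' hp' heq
      by_contra hne
      exact (hM.2 p hp p' hp' hne).2.2.2 heq
    rw [← Finset.sum_image (f := fun x => |f x - g x|) (fun p hp p' hp' => hinj1 hp hp'),
        ← Finset.sum_image (f := fun x => |f x - g x|) (fun p hp p' hp' => hinj2 hp hp')]
    have hdisj : Disjoint (M.image Prod.fst) (M.image Prod.snd) := by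
      rw [Finset.disjoint_left]
      rintro a ha hb
      rcases Finset.mem_image.1 ha with ⟨p, hp, rfl⟩
      rcases Finset.mem_image.1 hb with ⟨p', hp', heq⟩
      by_cases hpe : p = p'
      · subst hpe
        exact (hM.1 p hp).2.2.1 heq.symm
      · exact (hM.2 p hp p' hp' hpe).2.1 heq.symm
    rw [← Finset.sum_union hdisj]
    apply Finset.sum_le_sum_of_subset_of_nonneg
    · intro a ha
      rcases Finset.mem_union.1 ha with ha | ha
      · rcases Finset.mem_image.1 ha with ⟨p, hp, rfl⟩
        exact inGrid_mem_Icc (hM.1 p hp).1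
      · rcases Finset.mem_image.1 ha with ⟨p, hp, rfl⟩
        exact inGrid_mem_Icc (hM.1 p hp).2.1
    · intro x _ _
      exact abs_nonneg _
  have hsplit : ∑ p ∈ M, vs d l u f p.1 p.2
      ≤ (∑ p ∈ M', vs d l u g p.1 p.2) + ∑ p ∈ M, (|f p.1 - g p.1| + |f p.2 - g p.2|) := by
    have := Finset.sum_filter_add_sum_filter_not M
      (fun p => 0 < vs d l u g p.1 p.2) (fun p => vs d l u f p.1 p.2)
    have hDsplit := Finset.sum_filter_add_sum_filter_not M
      (fun p => 0 < vs d l u g p.1 p.2) (fun p => |f p.1 - g p.1| + |f p.2 - g p.2|)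
    have h1 : ∑ p ∈ M', vs d l u f p.1 p.2
        ≤ (∑ p ∈ M', vs d l u g p.1 p.2) +
          ∑ p ∈ M', (|f p.1 - g p.1| + |f p.2 - g p.2|) := by
      rw [← Finset.sum_add_distrib]
      exact Finset.sum_le_sum fun p _ => vs_le_vs_add d l u f g p.1 p.2
    have h2 : ∑ p ∈ M.filter (fun p => ¬ 0 < vs d l u g p.1 p.2), vs d l u f p.1 p.2
        ≤ ∑ p ∈ M.filter (fun p => ¬ 0 < vs d l u g p.1 p.2),
            (|f p.1 - g p.1| + |f p.2 - g p.2|) := by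
      apply Finset.sum_le_sum
      intro p hp
      have hnp : vs d l u g p.1 p.2 ≤ 0 := le_of_not_gt (Finset.mem_filter.1 hp).2
      have := vs_le_vs_add d l u f g p.1 p.2
      linarith
    linarith
  have hWg : ∑ p ∈ M', vs d l u g p.1 p.2 ≤ maxMatchWeight n d l u g :=
    le_csSup (matchSet_bdd n d l u g) ⟨M', hM', rfl⟩
  unfold maxMatchWeight at hWg
  linarith

/-- `|W_f − W_g| ≤ Σ_x |f(x) − g(x)|`, where `W_f`, `W_g` are the
maximum matching weights of the violation graphs of `f` and `g`. -/
theorem stmt11 (n d : ℕ) (hn : 2 ≤ n) (hd : 1 ≤ d)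
    (l u : Fin d → ℕ → ℝ)
    (hlu : ∀ r : Fin d, ∀ t : ℕ, 1 ≤ t → t + 1 ≤ n → l r t < u r t)
    (f g : (Fin d → ℕ) → ℝ) :
    |maxMatchWeight n d l u f - maxMatchWeight n d l u g|
      ≤ ∑ x ∈ Finset.Icc (fun _ => (1:ℕ)) (fun _ => n), |f x - g x| := by
  have h1 := key_lemma n d l u f g
  have h2 := key_lemma n d l u g f
  have h3 : ∑ x ∈ Finset.Icc (fun _ => (1:ℕ)) (fun _ => n), |g x - f x|
      = ∑ x ∈ Finset.Icc (fun _ => (1:ℕ)) (fun _ => n), |f x - g x| := by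
    apply Finset.sum_congr rfl
    intro x _
    rw [abs_sub_comm]
  rw [abs_sub_le_iff]
  constructor <;> linarith
end

section
/- Let f : [n] → ℝ with bounds l, u : {1,…,n−1} → ℝ, l(t) < u(t). Define g : [n] → ℝ by g(x) = f(x) + Σ_{v=x}^{n−1} (u(v)+l(v))/2, and define symmetrized bounds u'(v) = (u(v) − l(v))/2 and l'(v) = −u'(v). Then for every pair x < y in [n], the violation score of (x,y) for f with respect to the quasimetric of (l,u) equals the violation score of (x,y) for g with respect to the quasimetric of (l',u'): vs_f(x,y) = vs_g(x,y). -/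
open Finset

/-- The one-dimensional quasimetric of bounds `(l,u)`:
`m(x,y) = Σ_{t=y}^{x−1} u(t)` if `x > y`, `−Σ_{t=x}^{y−1} l(t)` if `x < y`, `0` if `x = y`. -/
def m1 (l u : ℕ → ℝ) (x y : ℕ) : ℝ :=
  (∑ t ∈ Finset.Ico y x, u t) - ∑ t ∈ Finset.Ico x y, l t

/-- The violation score of a pair `(x,y)` for `h : [n] → ℝ`:
`vs_h(x,y) = max{h(x) − h(y) − m(x,y), h(y) − h(x) − m(y,x)}`. -/
def vs1 (l u : ℕ → ℝ) (h : ℕ → ℝ) (x y : ℕ) : ℝ :=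
  max (h x - h y - m1 l u x y) (h y - h x - m1 l u y x)

/-- symmetrizing the bounds. With
`g(x) = f(x) + Σ_{v=x}^{n−1} (u(v)+l(v))/2`, `u'(v) = (u(v)−l(v))/2`, `l' = −u'`,
every pair `x < y` in `[n]` has the same violation score for `f` w.r.t. `(l,u)`
as for `g` w.r.t. `(l',u')`. -/
theorem stmt15 (n : ℕ) (hn : 2 ≤ n)
    (l u : ℕ → ℝ) (hlu : ∀ t : ℕ, 1 ≤ t → t + 1 ≤ n → l t < u t)
    (f g : ℕ → ℝ)
    (hg : ∀ x : ℕ, g x = f x + ∑ v ∈ Finset.Ico x n, (u v + l v) / 2)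
    (x y : ℕ) (hx : 1 ≤ x) (hxy : x < y) (hy : y ≤ n) :
    vs1 l u f x y
      = vs1 (fun v => -((u v - l v) / 2)) (fun v => (u v - l v) / 2) g x y := by
  have hsplit : (∑ v ∈ Finset.Ico x y, (u v + l v) / 2)
      + ∑ v ∈ Finset.Ico y n, (u v + l v) / 2
      = ∑ v ∈ Finset.Ico x n, (u v + l v) / 2 :=
    Finset.sum_Ico_consecutive _ hxy.le hy
  have he : Finset.Ico y x = ∅ := Finset.Ico_eq_empty (by omega)
  unfold vs1 m1
  rw [he, hg x, hg y]
  simp only [Finset.sum_empty, neg_div, Finset.sum_neg_distrib]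
  have h1 : ∑ t ∈ Finset.Ico x y, (u t + l t)/2 - ∑ t ∈ Finset.Ico x y, (u t - l t)/2
      = ∑ t ∈ Finset.Ico x y, l t := by
    rw [← Finset.sum_sub_distrib]; exact Finset.sum_congr rfl fun t _ => by ring
  have h2 : ∑ t ∈ Finset.Ico x y, (u t + l t)/2 + ∑ t ∈ Finset.Ico x y, (u t - l t)/2
      = ∑ t ∈ Finset.Ico x y, u t := by
    rw [← Finset.sum_add_distrib]; exact Finset.sum_congr rfl fun t _ => by ring
  rw [← hsplit]
  congr 1 <;> linarith
end

section
/- Let f : [n] → ℝ with bounds l = −u, u : {1,…,n−1} → ℝ with u(t) > 0 for all t, and u_M = max_t u(t). Suppose (x,y) with x < y is a violated pair, and set v = ⌈ vs_f(x,y) / (2·u_M) ⌉ − 1. Then for every z ∈ [x − v, y + v] ∩ [n], at least one of the unordered pairs (x,z) or (y,z) is violated by f. -/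
open Finset

lemma m1_symm_eq (u : ℕ → ℝ) (a b : ℕ) :
    m1 (fun t => -u t) u a b = ∑ t ∈ Finset.Ico (min a b) (max a b), u t := by
  unfold m1
  rcases le_total a b with h | h
  · rw [min_eq_left h, max_eq_right h, Finset.Ico_eq_empty (show ¬ b < a by omega)]
    simp
  · rw [min_eq_right h, max_eq_left h, Finset.Ico_eq_empty (show ¬ a < b by omega)]
    simp

lemma vs1_abs (u : ℕ → ℝ) (f : ℕ → ℝ) (a b : ℕ) :
    vs1 (fun t => -u t) u f a b
      = |f a - f b| - ∑ t ∈ Finset.Ico (min a b) (max a b), u t := by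
  rw [vs1, m1_symm_eq, m1_symm_eq, min_comm b a, max_comm b a, max_sub_sub_right,
    ← neg_sub (f a) (f b), ← abs_eq_max_neg]

/-- let `(x,y)` (`x < y`) be a violated pair and
`v = ⌈vs_f(x,y)/(2·u_M)⌉ − 1`, where `u_M = max_t u(t)`. Then for every
`z ∈ [x−v, y+v] ∩ [n]`, at least one of the pairs `(x,z)`, `(y,z)` is violated. -/
theorem stmt17 (n : ℕ) (hn : 2 ≤ n)
    (u : ℕ → ℝ) (hu : ∀ t : ℕ, 1 ≤ t → t + 1 ≤ n → 0 < u t)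
    (f : ℕ → ℝ)
    (uM : ℝ)
    (huM : uM = (Finset.Icc 1 (n - 1)).sup'
      (Finset.nonempty_Icc.mpr (by omega)) u)
    (x y : ℕ) (hx : 1 ≤ x) (hxy : x < y) (hy : y ≤ n)
    (hviol : 0 < vs1 (fun t => -u t) u f x y)
    (v : ℤ) (hv : v = ⌈vs1 (fun t => -u t) u f x y / (2 * uM)⌉ - 1)
    (z : ℕ) (hz1 : 1 ≤ z) (hzn : z ≤ n)
    (hzlo : (x : ℤ) - v ≤ (z : ℤ)) (hzhi : (z : ℤ) ≤ (y : ℤ) + v) :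
    0 < vs1 (fun t => -u t) u f x z ∨ 0 < vs1 (fun t => -u t) u f y z := by
  set s := vs1 (fun t => -u t) u f x y with hsdef
  have huM0 : 0 < uM := by
    rw [huM]
    exact lt_of_lt_of_le (hu 1 le_rfl hn)
      (Finset.le_sup' u (Finset.mem_Icc.mpr ⟨le_rfl, by omega⟩))
  have hbound : ∀ a b : ℕ, 1 ≤ a → a ≤ b → b ≤ n →
      (∑ t ∈ Finset.Ico a b, u t) ≤ ((b : ℝ) - a) * uM := by
    intro a b ha hab hb
    have h1 : ∀ t ∈ Finset.Ico a b, u t ≤ uM := by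
      intro t ht
      rw [Finset.mem_Ico] at ht
      rw [huM]
      exact Finset.le_sup' u (Finset.mem_Icc.mpr ⟨by omega, by omega⟩)
    calc ∑ t ∈ Finset.Ico a b, u t ≤ ∑ _t ∈ Finset.Ico a b, uM := Finset.sum_le_sum h1
      _ = ((b - a : ℕ) : ℝ) * uM := by rw [Finset.sum_const, Nat.card_Ico, nsmul_eq_mul]
      _ = ((b : ℝ) - a) * uM := by rw [Nat.cast_sub hab]
  have hseq : s = |f x - f y| - ∑ t ∈ Finset.Ico x y, u t := by
    rw [hsdef, vs1_abs, min_eq_left hxy.le, max_eq_right hxy.le]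
  have hvlt : (v : ℝ) < s / (2 * uM) := by
    rw [hv]
    push_cast
    have := Int.ceil_lt_add_one (s / (2 * uM))
    linarith
  have hvuM : (v : ℝ) * uM < s / 2 := by
    calc (v : ℝ) * uM < s / (2 * uM) * uM := mul_lt_mul_of_pos_right hvlt huM0
      _ = s / 2 := by field_simp
  by_contra hcon
  push_neg at hcon
  obtain ⟨h1, h2⟩ := hcon
  rw [vs1_abs] at h1 h2
  have htri : |f x - f y| ≤ |f x - f z| + |f y - f z| := by
    have := abs_sub_le (f x) (f z) (f y)
    rwa [abs_sub_comm (f z) (f y)] at this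
  rcases le_or_gt z x with hzx | hzx
  · rw [min_eq_right hzx, max_eq_left hzx] at h1
    rw [min_eq_right (by omega : z ≤ y), max_eq_left (by omega : z ≤ y)] at h2
    have hsplit : ∑ t ∈ Finset.Ico z x, u t + ∑ t ∈ Finset.Ico x y, u t
        = ∑ t ∈ Finset.Ico z y, u t := Finset.sum_Ico_consecutive u hzx hxy.le
    have hb : ∑ t ∈ Finset.Ico z x, u t ≤ ((x : ℝ) - z) * uM := hbound z x hz1 hzx (by omega)
    have hxz : ((x : ℝ) - z) ≤ (v : ℝ) := by
      have : ((x : ℤ) : ℝ) - ((z : ℤ) : ℝ) ≤ ((v : ℤ) : ℝ) := by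
        exact_mod_cast (by omega : (x : ℤ) - z ≤ v)
      push_cast at this
      linarith
    have hmm : ((x : ℝ) - z) * uM ≤ (v : ℝ) * uM := mul_le_mul_of_nonneg_right hxz huM0.le
    linarith
  rcases le_or_gt z y with hzy | hzy
  · rw [min_eq_left hzx.le, max_eq_right hzx.le] at h1
    rw [min_eq_right hzy, max_eq_left hzy] at h2
    have hsplit : ∑ t ∈ Finset.Ico x z, u t + ∑ t ∈ Finset.Ico z y, u t
        = ∑ t ∈ Finset.Ico x y, u t := Finset.sum_Ico_consecutive u hzx.le hzy
    have h2' : |f z - f y| - ∑ t ∈ Finset.Ico z y, u t ≤ 0 := by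
      rwa [abs_sub_comm] at h2
    linarith
  · rw [min_eq_left hzx.le, max_eq_right hzx.le] at h1
    rw [min_eq_left hzy.le, max_eq_right hzy.le] at h2
    have hsplit : ∑ t ∈ Finset.Ico x y, u t + ∑ t ∈ Finset.Ico y z, u t
        = ∑ t ∈ Finset.Ico x z, u t := Finset.sum_Ico_consecutive u hxy.le hzy.le
    have hb : ∑ t ∈ Finset.Ico y z, u t ≤ ((z : ℝ) - y) * uM :=
      hbound y z (by omega) hzy.le hzn
    have hyz : ((z : ℝ) - y) ≤ (v : ℝ) := by
      have : ((z : ℤ) : ℝ) - ((y : ℤ) : ℝ) ≤ ((v : ℤ) : ℝ) := by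
        exact_mod_cast (by omega : (z : ℤ) - y ≤ v)
      push_cast at this
      linarith
    have hmm : ((z : ℝ) - y) * uM ≤ (v : ℝ) * uM := mul_le_mul_of_nonneg_right hyz huM0.le
    linarith
end
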